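/- Let Ms, a > 0, M(H) = Ms·(coth(H/a) - a/H) for H > 0. The susceptibility χ(H) = M(H)/H is strictly decreasing on (0, ∞). -/

import Mathlib

open Real

/-- helper: if f 0 = 0 and f' > 0 on (0,∞), then f > 0 on (0,∞). -/
lemma pos_of_deriv_pos {f f' : ℝ → ℝ} (hd : ∀ x, HasDerivAt f (f' x) x)
    (h0 : f 0 = 0) (hp : ∀ x, 0 < x → 0 < f' x) : ∀ x, 0 < x → 0 < f x := by
  have mono : StrictMonoOn f (Set.Ici 0) := by
    apply strictMonoOn_of_deriv_pos (convex_Ici 0)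
    · exact fun x _ => (hd x).differentiableAt.continuousAt.continuousWithinAt
    · intro x hx
      rw [interior_Ici] at hx
      rw [(hd x).deriv]
      exact hp x hx
  intro x hx
  have := mono Set.self_mem_Ici (Set.mem_Ici.2 hx.le) hx
  simpa [h0] using this

lemma sinh_lt_mul_cosh : ∀ t : ℝ, 0 < t → 0 < t * Real.cosh t - Real.sinh t := by
  apply pos_of_deriv_pos (f' := fun t => 1 * Real.cosh t + t * Real.sinh t - Real.cosh t)
  · intro t
    exact ((hasDerivAt_id t).mul (Real.hasDerivAt_cosh t)).sub (Real.hasDerivAt_sinh t)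
  · simp
  · intro t ht
    have hs : 0 < Real.sinh t := Real.sinh_pos_iff.mpr ht
    nlinarith

lemma k2_pos : ∀ x : ℝ, 0 < x →
    0 < 2 - 2 * Real.cosh x ^ 2 - 2 * Real.sinh x ^ 2 + 4 * x * (Real.sinh x * Real.cosh x) := by
  apply pos_of_deriv_pos
    (f' := fun x => 4 * x * Real.cosh x ^ 2 + 4 * x * Real.sinh x ^ 2 - 4 * (Real.sinh x * Real.cosh x))
  · intro x
    have h :
        HasDerivAt (fun x => 2 - 2 * Real.cosh x ^ 2 - 2 * Real.sinh x ^ 2 + 4 * x * (Real.sinh x * Real.cosh x))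
          (0 - 2 * (2 * Real.cosh x ^ 1 * Real.sinh x) - 2 * (2 * Real.sinh x ^ 1 * Real.cosh x)
            + ((4 * 1) * (Real.sinh x * Real.cosh x)
              + (4 * x) * (Real.cosh x * Real.cosh x + Real.sinh x * Real.sinh x))) x := by
      exact (((hasDerivAt_const x (2:ℝ)).sub (((Real.hasDerivAt_cosh x).pow 2).const_mul 2)).sub
        (((Real.hasDerivAt_sinh x).pow 2).const_mul 2)).add
        ((((hasDerivAt_id x).const_mul 4)).mul ((Real.hasDerivAt_sinh x).mul (Real.hasDerivAt_cosh x)))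
    rw [show 4 * x * Real.cosh x ^ 2 + 4 * x * Real.sinh x ^ 2 - 4 * (Real.sinh x * Real.cosh x)
        = 0 - 2 * (2 * Real.cosh x ^ 1 * Real.sinh x) - 2 * (2 * Real.sinh x ^ 1 * Real.cosh x)
            + ((4 * 1) * (Real.sinh x * Real.cosh x)
              + (4 * x) * (Real.cosh x * Real.cosh x + Real.sinh x * Real.sinh x)) from by ring]
    exact h
  · simp
  · intro x hx
    have hm := sinh_lt_mul_cosh x hx
    have hc : 0 < Real.cosh x := Real.cosh_pos _
    have hs : 0 < Real.sinh x := Real.sinh_pos_iff.mpr hx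
    nlinarith

lemma k1_pos : ∀ x : ℝ, 0 < x →
    0 < 2 * x + x * Real.cosh x ^ 2 + x * Real.sinh x ^ 2 - 3 * (Real.sinh x * Real.cosh x) := by
  apply pos_of_deriv_pos
    (f' := fun x => 2 - 2 * Real.cosh x ^ 2 - 2 * Real.sinh x ^ 2 + 4 * x * (Real.sinh x * Real.cosh x))
  · intro x
    have h :
        HasDerivAt (fun x => 2 * x + x * Real.cosh x ^ 2 + x * Real.sinh x ^ 2 - 3 * (Real.sinh x * Real.cosh x))
          (2 * 1 + (1 * Real.cosh x ^ 2 + x * (2 * Real.cosh x ^ 1 * Real.sinh x))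
            + (1 * Real.sinh x ^ 2 + x * (2 * Real.sinh x ^ 1 * Real.cosh x))
            - 3 * (Real.cosh x * Real.cosh x + Real.sinh x * Real.sinh x)) x := by
      exact ((((hasDerivAt_id x).const_mul 2).add
        ((hasDerivAt_id x).mul ((Real.hasDerivAt_cosh x).pow 2))).add
        ((hasDerivAt_id x).mul ((Real.hasDerivAt_sinh x).pow 2))).sub
        (((Real.hasDerivAt_sinh x).mul (Real.hasDerivAt_cosh x)).const_mul 3)
    rw [show 2 - 2 * Real.cosh x ^ 2 - 2 * Real.sinh x ^ 2 + 4 * x * (Real.sinh x * Real.cosh x)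
        = 2 * 1 + (1 * Real.cosh x ^ 2 + x * (2 * Real.cosh x ^ 1 * Real.sinh x))
            + (1 * Real.sinh x ^ 2 + x * (2 * Real.sinh x ^ 1 * Real.cosh x))
            - 3 * (Real.cosh x * Real.cosh x + Real.sinh x * Real.sinh x) from ?_]
    · exact h
    · have := Real.cosh_sq_sub_sinh_sq x
      nlinarith [Real.cosh_sq_sub_sinh_sq x]
  · simp
  · exact k2_pos

lemma k_pos : ∀ x : ℝ, 0 < x →
    0 < x ^ 2 + x * (Real.sinh x * Real.cosh x) - 2 * Real.sinh x ^ 2 := by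
  apply pos_of_deriv_pos
    (f' := fun x => 2 * x + x * Real.cosh x ^ 2 + x * Real.sinh x ^ 2 - 3 * (Real.sinh x * Real.cosh x))
  · intro x
    have h :
        HasDerivAt (fun x => x ^ 2 + x * (Real.sinh x * Real.cosh x) - 2 * Real.sinh x ^ 2)
          (2 * x ^ 1 * 1 + (1 * (Real.sinh x * Real.cosh x)
            + x * (Real.cosh x * Real.cosh x + Real.sinh x * Real.sinh x))
            - 2 * (2 * Real.sinh x ^ 1 * Real.cosh x)) x := by
      exact (((hasDerivAt_id x).pow 2).add
        ((hasDerivAt_id x).mul ((Real.hasDerivAt_sinh x).mul (Real.hasDerivAt_cosh x)))).sub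
        (((Real.hasDerivAt_sinh x).pow 2).const_mul 2)
    rw [show 2 * x + x * Real.cosh x ^ 2 + x * Real.sinh x ^ 2 - 3 * (Real.sinh x * Real.cosh x)
        = 2 * x ^ 1 * 1 + (1 * (Real.sinh x * Real.cosh x)
            + x * (Real.cosh x * Real.cosh x + Real.sinh x * Real.sinh x))
            - 2 * (2 * Real.sinh x ^ 1 * Real.cosh x) from ?_]
    · exact h
    · nlinarith [Real.cosh_sq_sub_sinh_sq x]
  · simp
  · exact k1_pos

theorem susceptibility_strictAnti (Ms a : ℝ) (hMs : 0 < Ms) (ha : 0 < a) :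
    StrictAntiOn
      (fun H : ℝ => Ms * (Real.cosh (H / a) / Real.sinh (H / a) - a / H) / H)
      (Set.Ioi 0) := by
  set f : ℝ → ℝ := fun H => Ms * (Real.cosh (H / a) / Real.sinh (H / a) - a / H) / H with hf
  have key : ∀ H : ℝ, 0 < H → HasDerivAt f
      ((Ms * (((Real.sinh (H / a) * (1 / a)) * Real.sinh (H / a)
          - Real.cosh (H / a) * (Real.cosh (H / a) * (1 / a))) / Real.sinh (H / a) ^ 2
          - (0 * H - a * 1) / H ^ 2) * H
        - Ms * (Real.cosh (H / a) / Real.sinh (H / a) - a / H) * 1) / H ^ 2) H := by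
    intro H hH
    have hHa : 0 < H / a := div_pos hH ha
    have hs : Real.sinh (H / a) ≠ 0 := (Real.sinh_pos_iff.mpr hHa).ne'
    have hu : HasDerivAt (fun H : ℝ => H / a) (1 / a) H := by
      simpa using (hasDerivAt_id H).div_const a
    have hc : HasDerivAt (fun H : ℝ => Real.cosh (H / a)) (Real.sinh (H / a) * (1 / a)) H :=
      by exact (Real.hasDerivAt_cosh (H / a)).comp H hu
    have hsh : HasDerivAt (fun H : ℝ => Real.sinh (H / a)) (Real.cosh (H / a) * (1 / a)) H :=
      by exact (Real.hasDerivAt_sinh (H / a)).comp H hu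
    have hq : HasDerivAt (fun H : ℝ => Real.cosh (H / a) / Real.sinh (H / a))
        (((Real.sinh (H / a) * (1 / a)) * Real.sinh (H / a)
          - Real.cosh (H / a) * (Real.cosh (H / a) * (1 / a))) / Real.sinh (H / a) ^ 2) H :=
      hc.div hsh hs
    have haH : HasDerivAt (fun H : ℝ => a / H) ((0 * H - a * 1) / H ^ 2) H :=
      (hasDerivAt_const H a).div (hasDerivAt_id H) hH.ne'
    have hnum : HasDerivAt (fun H : ℝ => Ms * (Real.cosh (H / a) / Real.sinh (H / a) - a / H))
        (Ms * (((Real.sinh (H / a) * (1 / a)) * Real.sinh (H / a)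
          - Real.cosh (H / a) * (Real.cosh (H / a) * (1 / a))) / Real.sinh (H / a) ^ 2
          - (0 * H - a * 1) / H ^ 2)) H := by
      exact (hq.sub haH).const_mul Ms
    exact hnum.div (hasDerivAt_id H) hH.ne'
  apply strictAntiOn_of_deriv_neg (convex_Ioi 0)
  · intro H hH
    exact ((key H hH).differentiableAt).continuousAt.continuousWithinAt
  · intro H hH
    rw [interior_Ioi] at hH
    rw [(key H hH).deriv]
    have hHa : 0 < H / a := div_pos hH ha
    have hs : 0 < Real.sinh (H / a) := Real.sinh_pos_iff.mpr hHa
    have hc : 0 < Real.cosh (H / a) := Real.cosh_pos _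
    have hid : Real.cosh (H / a) ^ 2 - Real.sinh (H / a) ^ 2 = 1 := Real.cosh_sq_sub_sinh_sq _
    have hk := k_pos (H / a) hHa
    have hH0 : (0:ℝ) < H := hH
    apply div_neg_of_neg_of_pos _ (pow_pos hH0 2)
    -- numerator
    have hnum : (Ms * (((Real.sinh (H / a) * (1 / a)) * Real.sinh (H / a)
          - Real.cosh (H / a) * (Real.cosh (H / a) * (1 / a))) / Real.sinh (H / a) ^ 2
          - (0 * H - a * 1) / H ^ 2) * H
        - Ms * (Real.cosh (H / a) / Real.sinh (H / a) - a / H) * 1)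
        = Ms * (2 * a ^ 2 * Real.sinh (H / a) ^ 2 - H ^ 2
            - a * H * (Real.sinh (H / a) * Real.cosh (H / a))) / (a * H * Real.sinh (H / a) ^ 2) := by
      field_simp
      linear_combination (-(H ^ 2)) * hid
    rw [hnum]
    apply div_neg_of_neg_of_pos _ (mul_pos (mul_pos ha hH0) (pow_pos hs 2))
    have h2 : 2 * Real.sinh (H / a) ^ 2 < (H / a) ^ 2 + (H / a) * (Real.sinh (H / a) * Real.cosh (H / a)) := by
      linarith
    have h4 := mul_lt_mul_of_pos_left h2 (pow_pos ha 2)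
    have h5 : a ^ 2 * ((H / a) ^ 2 + (H / a) * (Real.sinh (H / a) * Real.cosh (H / a)))
        = H ^ 2 + a * H * (Real.sinh (H / a) * Real.cosh (H / a)) := by
      field_simp
    have h3 : 2 * a ^ 2 * Real.sinh (H / a) ^ 2 - H ^ 2
        - a * H * (Real.sinh (H / a) * Real.cosh (H / a)) < 0 := by
      rw [h5] at h4
      linarith
    exact mul_neg_of_pos_of_neg hMs h3
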